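/- arXiv:1109.0064 — 4 statements merged into one kernel-verified Lean document; each statement's English description precedes it below -/
import Mathlib

section
/- Let Q̃ be a cochain complex of vector spaces over a field F of characteristic 2, equipped with a three-step filtration with associated graded pieces U₀, Q, U₂ (in filtration degrees 0, 1, 2), structure maps i : U₀ → Q, j : Q → U₂ (chain maps) and η : U₀ → U₂ satisfying d′η + ηd = ji, where d denotes the differentials on U₀ and Q and d′ the differential on U₂. If η is an isomorphism of graded F-modules, then d + iη⁻¹j is a differential on Q (i.e., (d + iη⁻¹j)² = 0). -/
/-- Over a field of characteristic 2: given a three-step filtered complex with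
associated graded pieces `U₀, Q, U₂`, internal differentials `dU0, dQ, d'`,
chain maps `i : U₀ → Q`, `j : Q → U₂`, and a homotopy `η : U₀ → U₂` with
`d'η + ηd = ji`; if `η` is an isomorphism then `d + iη⁻¹j` is a differential
on `Q`, i.e. `(dQ + i ∘ η⁻¹ ∘ j)² = 0`. -/
theorem stmt_11 {F U0 Q U2 : Type*} [Field F] [CharP F 2]
    [AddCommGroup U0] [Module F U0] [AddCommGroup Q] [Module F Q]
    [AddCommGroup U2] [Module F U2]
    (dU0 : U0 →ₗ[F] U0) (dQ : Q →ₗ[F] Q) (d' : U2 →ₗ[F] U2)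
    (i : U0 →ₗ[F] Q) (j : Q →ₗ[F] U2) (η : U0 ≃ₗ[F] U2)
    (hd0 : dU0 ∘ₗ dU0 = 0) (hdQ : dQ ∘ₗ dQ = 0) (hd' : d' ∘ₗ d' = 0)
    (hi : dQ ∘ₗ i = i ∘ₗ dU0) (hj : d' ∘ₗ j = j ∘ₗ dQ)
    (hη : d' ∘ₗ η.toLinearMap + η.toLinearMap ∘ₗ dU0 = j ∘ₗ i) :
    (dQ + i ∘ₗ η.symm.toLinearMap ∘ₗ j) ∘ₗ (dQ + i ∘ₗ η.symm.toLinearMap ∘ₗ j) = 0 := by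
  have h2 : ∀ y : Q, y + y = 0 := fun y => by
    rw [← two_smul F y, show ((2 : F) = 0) from CharP.cast_eq_zero F 2, zero_smul]
  ext x
  have hji : ∀ u : U0, j (i u) = d' (η u) + η (dU0 u) := fun u => by
    have := LinearMap.congr_fun hη u
    simpa using this.symm
  have hix : ∀ u : U0, dQ (i u) = i (dU0 u) := fun u => LinearMap.congr_fun hi u
  have hjx : ∀ q : Q, d' (j q) = j (dQ q) := fun q => LinearMap.congr_fun hj q
  have hdQx : ∀ q : Q, dQ (dQ q) = 0 := fun q => LinearMap.congr_fun hdQ q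
  simp only [LinearMap.add_apply, LinearMap.comp_apply, LinearMap.zero_apply,
    LinearEquiv.coe_coe, map_add, hdQx, zero_add]
  rw [hix, hji, ← hjx, map_add, map_add, η.symm_apply_apply, η.apply_symm_apply]
  abel_nf
  rw [two_smul, two_smul, h2, h2, add_zero]
end

section
/- With the hypotheses of the preceding setup (η an isomorphism, d′ = ηdη⁻¹ + jiη⁻¹), the map τ : (Q, d + iη⁻¹j)[1] → Q̃ defined by τ(x) = x + η⁻¹j(x) is an injective chain map. -/
/-- With the setup of the filtered complex `Q̃ = U₀ ⊕ Q ⊕ U₂` (total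
differential `D(a,q,u) = (dU0 a, i a + dQ q, η a + j q + d' u)`), the map
`τ(x) = η⁻¹ j(x) + x` from `(Q, dQ + iη⁻¹j)[1]` to `Q̃` is an injective chain
map. -/
theorem stmt_12 {F U0 Q U2 : Type*} [Field F] [CharP F 2]
    [AddCommGroup U0] [Module F U0] [AddCommGroup Q] [Module F Q]
    [AddCommGroup U2] [Module F U2]
    (dU0 : U0 →ₗ[F] U0) (dQ : Q →ₗ[F] Q) (d' : U2 →ₗ[F] U2)
    (i : U0 →ₗ[F] Q) (j : Q →ₗ[F] U2) (η : U0 ≃ₗ[F] U2)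
    (hd0 : dU0 ∘ₗ dU0 = 0) (hdQ : dQ ∘ₗ dQ = 0) (hd' : d' ∘ₗ d' = 0)
    (hi : dQ ∘ₗ i = i ∘ₗ dU0) (hj : d' ∘ₗ j = j ∘ₗ dQ)
    (hη : d' ∘ₗ η.toLinearMap + η.toLinearMap ∘ₗ dU0 = j ∘ₗ i) :
    Function.Injective (fun x : Q => ((η.symm (j x), x, (0 : U2)) : U0 × Q × U2))
    ∧ ∀ x : Q,
      ((dU0 (η.symm (j x)),
        i (η.symm (j x)) + dQ x,
        η (η.symm (j x)) + j x + d' (0 : U2)) : U0 × Q × U2)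
      = (η.symm (j (dQ x + i (η.symm (j x)))),
         dQ x + i (η.symm (j x)),
         (0 : U2)) := by
  have htwo : ∀ m : U2, m + m = 0 := by
    intro m
    have : m + m = (2 : F) • m := by rw [two_smul]
    rw [this, show (2 : F) = 0 from CharTwo.two_eq_zero, zero_smul]
  constructor
  · intro x y h
    exact congrArg (fun p : U0 × Q × U2 => p.2.1) h
  · intro x
    refine Prod.ext ?_ (Prod.ext ?_ ?_)
    · have h1 := congrArg (fun f : U0 →ₗ[F] U2 => f (η.symm (j x))) hη
      simp only [LinearMap.add_apply, LinearMap.comp_apply,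
        LinearEquiv.coe_coe, LinearEquiv.apply_symm_apply] at h1
      have h3 := congrArg (fun f : Q →ₗ[F] U2 => f x) hj
      simp only [LinearMap.comp_apply] at h3
      have key : η (dU0 (η.symm (j x))) = j (dQ x + i (η.symm (j x))) := by
        rw [map_add, ← h3, ← h1, ← add_assoc, htwo, zero_add]
      rw [LinearEquiv.eq_symm_apply]; exact key
    · simp [add_comm]
    · simp only [map_zero, add_zero, LinearEquiv.apply_symm_apply]
      exact htwo (j x)
end

section
/- With the hypotheses of the preceding setup, the cokernel of τ : (Q, d + iη⁻¹j)[1] → Q̃ is isomorphic as a cochain complex to the cone of an isomorphism λ : U₂′ → U₂, hence is acyclic; consequently τ is a quasi-isomorphism, i.e., H*(Q̃) ≅ H*((Q, d + iη⁻¹j)[1]). -/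
private lemma char2_self_add {F M : Type*} [Field F] [CharP F 2]
    [AddCommGroup M] [Module F M] (v : M) : v + v = 0 := by
  have h2 : (2 : F) = 0 := by exact_mod_cast CharP.cast_eq_zero F 2
  have : (2 : F) • v = 0 := by rw [h2, zero_smul]
  simpa [two_smul] using this

/-- With the setup of the filtered complex `Q̃ = U₀ ⊕ Q ⊕ U₂` with total
differential `D`, the chain map `τ(x) = η⁻¹j(x) + x` is a quasi-isomorphism
from `(Q, dQ + iη⁻¹j)[1]` to `Q̃`: it induces an isomorphism on cohomology,
expressed as surjectivity and injectivity of the induced map on `ker/im`. -/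
theorem stmt_13 {F U0 Q U2 : Type*} [Field F] [CharP F 2]
    [AddCommGroup U0] [Module F U0] [AddCommGroup Q] [Module F Q]
    [AddCommGroup U2] [Module F U2]
    (dU0 : U0 →ₗ[F] U0) (dQ : Q →ₗ[F] Q) (d' : U2 →ₗ[F] U2)
    (i : U0 →ₗ[F] Q) (j : Q →ₗ[F] U2) (η : U0 ≃ₗ[F] U2)
    (hd0 : dU0 ∘ₗ dU0 = 0) (hdQ : dQ ∘ₗ dQ = 0) (hd' : d' ∘ₗ d' = 0)
    (hi : dQ ∘ₗ i = i ∘ₗ dU0) (hj : d' ∘ₗ j = j ∘ₗ dQ)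
    (hη : d' ∘ₗ η.toLinearMap + η.toLinearMap ∘ₗ dU0 = j ∘ₗ i) :
    let δQ : Q →ₗ[F] Q := dQ + i ∘ₗ η.symm.toLinearMap ∘ₗ j
    let p0 : (U0 × Q × U2) →ₗ[F] U0 := LinearMap.fst F U0 (Q × U2)
    let p1 : (U0 × Q × U2) →ₗ[F] Q :=
      (LinearMap.fst F Q U2) ∘ₗ (LinearMap.snd F U0 (Q × U2))
    let p2 : (U0 × Q × U2) →ₗ[F] U2 :=
      (LinearMap.snd F Q U2) ∘ₗ (LinearMap.snd F U0 (Q × U2))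
    let D : (U0 × Q × U2) →ₗ[F] (U0 × Q × U2) :=
      (dU0 ∘ₗ p0).prod ((i ∘ₗ p0 + dQ ∘ₗ p1).prod
        (η.toLinearMap ∘ₗ p0 + j ∘ₗ p1 + d' ∘ₗ p2))
    let τ : Q →ₗ[F] (U0 × Q × U2) :=
      (η.symm.toLinearMap ∘ₗ j).prod (LinearMap.id.prod (0 : Q →ₗ[F] U2))
    (∀ v : U0 × Q × U2, D v = 0 →
        ∃ x : Q, δQ x = 0 ∧ v - τ x ∈ LinearMap.range D)
    ∧ (∀ x : Q, δQ x = 0 → τ x ∈ LinearMap.range D →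
        ∃ y : Q, δQ y = x) := by
  intro δQ p0 p1 p2 D τ
  have hie : ∀ u : U0, dQ (i u) = i (dU0 u) := fun u => LinearMap.congr_fun hi u
  have hηe : ∀ u : U0, d' (η u) + η (dU0 u) = j (i u) := fun u => by
    simpa using LinearMap.congr_fun hη u
  constructor
  · rintro ⟨a, b, c⟩ hv
    simp only [D, p0, p1, p2, LinearMap.prod_apply, Function.prod, LinearMap.add_apply,
      LinearMap.comp_apply, LinearMap.fst_apply, LinearMap.snd_apply,
      LinearEquiv.coe_coe, Prod.mk_eq_zero] at hv
    obtain ⟨h1, h2, h3⟩ := hv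
    set e : U0 := η.symm c with he
    have hec : η e = c := η.apply_symm_apply c
    set x : Q := b + i e with hx
    have h4 : j b + d' c = η a := by
      linear_combination (norm := abel) h3 - char2_self_add (F := F) (η a)
    have hjx : j x = η a + η (dU0 e) := by
      rw [hx, map_add j b (i e), ← hηe e, hec]
      linear_combination (norm := abel) h4
    have hsx : η.symm (j x) = a + dU0 e := by
      rw [hjx, map_add, η.symm_apply_apply, η.symm_apply_apply]
    refine ⟨x, ?_, ⟨(e, 0, 0), ?_⟩⟩
    · simp only [δQ, LinearMap.add_apply, LinearMap.comp_apply, LinearEquiv.coe_coe]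
      rw [hsx, hx, map_add dQ b (i e), hie e, map_add i a (dU0 e)]
      linear_combination (norm := abel) h2 + char2_self_add (F := F) (i (dU0 e))
    · simp only [D, τ, p0, p1, p2, LinearMap.prod_apply, Function.prod, LinearMap.add_apply,
        LinearMap.comp_apply, LinearMap.fst_apply, LinearMap.snd_apply,
        LinearMap.id_apply, LinearMap.zero_apply, LinearEquiv.coe_coe, map_zero,
        add_zero, zero_add, sub_zero, Prod.mk_sub_mk, Prod.mk.injEq]
      refine ⟨?_, ?_, ?_⟩
      · rw [hsx]
        linear_combination (norm := abel) char2_self_add (F := F) (dU0 e)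
      · rw [hx]
        linear_combination (norm := abel) char2_self_add (F := F) (i e)
      · rw [hec]
  · rintro x _ ⟨⟨a, b, c⟩, hv⟩
    simp only [D, τ, p0, p1, p2, LinearMap.prod_apply, Function.prod, LinearMap.add_apply,
      LinearMap.comp_apply, LinearMap.fst_apply, LinearMap.snd_apply,
      LinearMap.id_apply, LinearMap.zero_apply, LinearEquiv.coe_coe,
      Prod.mk.injEq] at hv
    obtain ⟨g1, g2, g3⟩ := hv
    have hec : η (η.symm c) = c := η.apply_symm_apply c
    have h4 : j b + d' c = η a := by
      linear_combination (norm := abel) g3 - char2_self_add (F := F) (η a)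
    refine ⟨b + i (η.symm c), ?_⟩
    have hjy : j (b + i (η.symm c)) = η a + η (dU0 (η.symm c)) := by
      rw [map_add j b (i (η.symm c)), ← hηe (η.symm c), hec]
      linear_combination (norm := abel) h4
    have hsy : η.symm (j (b + i (η.symm c))) = a + dU0 (η.symm c) := by
      rw [hjy, map_add, η.symm_apply_apply, η.symm_apply_apply]
    simp only [δQ, LinearMap.add_apply, LinearMap.comp_apply, LinearEquiv.coe_coe]
    rw [hsy, map_add dQ b (i (η.symm c)), hie (η.symm c),
      map_add i a (dU0 (η.symm c))]
    linear_combination (norm := abel) g2 + char2_self_add (F := F) (i (dU0 (η.symm c)))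
end

section
/- Let F ⊆ E be fields, and let C_F, C_E be finite-dimensional cochain complexes over F and E respectively with a common basis indexed by the same finite set, such that whenever the differential coefficient c^E_{(x,y)} is nonzero in C_E, the corresponding coefficient c^F_{(x,y)} is nonzero in C_F, and moreover each c^F is a rational expression that specializes to c^E. If C_F has coefficients in a field of rational functions (generic coefficients), then for every i, dim_F H^i(C_F) ≤ dim_E H^i(C_E). -/
open Module Matrix Set Submodule

section RankLemmas

variable {K : Type*} [Field K] {m n : Type*} [Fintype m] [Fintype n]

/-- Selecting columns does not increase rank. -/
lemma rank_submatrix_col_le' (A : Matrix m n K) {l : Type*} [Fintype l] (c : l → n) :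
    (A.submatrix id c).rank ≤ A.rank := by
  rw [rank_eq_finrank_span_cols, rank_eq_finrank_span_cols]
  apply Submodule.finrank_mono
  apply Submodule.span_mono
  rintro _ ⟨j, rfl⟩
  exact ⟨c j, rfl⟩

/-- Selecting rows does not increase rank. -/
lemma rank_submatrix_row_le' (A : Matrix m n K) {l : Type*} [Fintype l] (r : l → m) :
    (A.submatrix r id).rank ≤ A.rank := by
  have h : (A.submatrix r id).mulVecLin
      = LinearMap.funLeft K K r ∘ₗ A.mulVecLin := by
    have := Matrix.mulVecLin_submatrix r (Equiv.refl n) A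
    exact this.trans (by ext x; rfl)
  rw [Matrix.rank, h, LinearMap.range_comp]
  exact (Submodule.finrank_map_le _ _).trans (le_of_eq rfl)

/-- A nonzero `k × k` minor forces the rank to be at least `k`. -/
lemma le_rank_of_det_submatrix_ne_zero (A : Matrix m n K) {k : ℕ}
    (r : Fin k → m) (c : Fin k → n) (h : (A.submatrix r c).det ≠ 0) :
    k ≤ A.rank := by
  have hu : IsUnit (A.submatrix r c) :=
    (Matrix.isUnit_iff_isUnit_det _).2 (isUnit_iff_ne_zero.2 h)
  have h1 : (A.submatrix r c).rank = k := by
    rw [Matrix.rank_of_isUnit _ hu, Fintype.card_fin]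
  have h2 : A.submatrix r c = (A.submatrix r id).submatrix id c := rfl
  calc k = (A.submatrix r c).rank := h1.symm
    _ ≤ (A.submatrix r id).rank := by
        rw [h2]; exact rank_submatrix_col_le' _ c
    _ ≤ A.rank := rank_submatrix_row_le' _ r

/-- A matrix of rank `k` has `k` linearly independent columns. -/
lemma exists_linearIndependent_cols (A : Matrix m n K) {k : ℕ} (hk : A.rank = k) :
    ∃ c : Fin k → n, LinearIndependent K fun i => Aᵀ (c i) := by
  classical
  obtain ⟨b, hbsub, hbspan, hbind⟩ := exists_linearIndependent K (Set.range Aᵀ)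
  have hbfin : b.Finite := (Set.finite_range Aᵀ).subset hbsub
  haveI := hbfin.fintype
  have hcard : Fintype.card b = k := by
    have h1 : finrank K (span K (Set.range ((↑) : b → (m → K)))) = Fintype.card b :=
      finrank_span_eq_card hbind
    rw [Subtype.range_coe, hbspan] at h1
    rw [← h1, ← hk, rank_eq_finrank_span_cols]
    rfl
  set e : Fin k ≃ b := (Fintype.equivFinOfCardEq hcard).symm with he
  choose g hg using fun x : b => hbsub x.2
  refine ⟨fun i => g (e i), ?_⟩
  have h2 : LinearIndependent K fun i : Fin k => ((e i : (m → K))) :=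
    hbind.comp e e.injective
  convert h2 using 1
  funext i
  exact hg (e i)

/-- A matrix of rank `k` has a nonzero `k × k` minor. -/
lemma exists_det_submatrix_ne_zero (A : Matrix m n K) {k : ℕ} (hk : A.rank = k) :
    ∃ (r : Fin k → m) (c : Fin k → n), (A.submatrix r c).det ≠ 0 := by
  classical
  obtain ⟨c, hc⟩ := exists_linearIndependent_cols A hk
  set B : Matrix m (Fin k) K := A.submatrix id c with hB
  have hBt : Bᵀ.rank = k := by
    have hrows : LinearIndependent K fun i : Fin k => Bᵀ i := by
      convert hc using 1
      rfl
    rw [LinearIndependent.rank_matrix (M := Bᵀ) hrows, Fintype.card_fin]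
  obtain ⟨r, hr⟩ := exists_linearIndependent_cols Bᵀ hBt
  -- `fun i => Bᵀᵀ (r i) = fun i => B (r i)` are independent rows of the square matrix
  have hrows : LinearIndependent K fun i : Fin k => (B.submatrix r id) i := by
    convert hr using 1
    rfl
  have hu : IsUnit (B.submatrix r id) :=
    Matrix.linearIndependent_rows_iff_isUnit.1 hrows
  refine ⟨r, c, ?_⟩
  have : B.submatrix r id = A.submatrix r c := rfl
  rw [← this]
  exact ((Matrix.isUnit_iff_isUnit_det _).1 hu).ne_zero

end RankLemmas

/-- Specializing the entries of a matrix can only decrease its rank. -/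
lemma rank_map_spec_le {F E : Type*} [Field F] [Field E] (S : Subring F) (ψ : S →+* E)
    {m n : Type*} [Fintype m] [Fintype n] (A : Matrix m n S) :
    (A.map ψ).rank ≤ (A.map S.subtype).rank := by
  classical
  obtain ⟨r, c, hdet⟩ := exists_det_submatrix_ne_zero (A.map ψ) rfl
  have h1 : (A.map ψ).submatrix r c = (A.submatrix r c).map ψ := rfl
  have h2 : (A.submatrix r c).det ≠ 0 := by
    intro h0
    apply hdet
    rw [h1, show (A.submatrix r c).map ⇑ψ = ψ.mapMatrix (A.submatrix r c) from rfl,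
      ← RingHom.map_det, h0, map_zero]
  have h3 : ((A.map S.subtype).submatrix r c).det ≠ 0 := by
    have h4 : (A.map S.subtype).submatrix r c = (A.submatrix r c).map S.subtype := rfl
    rw [h4, show (A.submatrix r c).map ⇑S.subtype = S.subtype.mapMatrix (A.submatrix r c) from rfl,
      ← RingHom.map_det]
    simpa using h2
  exact le_rank_of_det_submatrix_ne_zero _ r c h3

/-- The cohomology at the middle spot of `A → B → C`. -/
abbrev homologyAt' {F A B C : Type*} [Field F]
    [AddCommGroup A] [Module F A] [AddCommGroup B] [Module F B]
    [AddCommGroup C] [Module F C] (f : A →ₗ[F] B) (g : B →ₗ[F] C) :=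
  LinearMap.ker g ⧸ Submodule.comap (LinearMap.ker g).subtype (LinearMap.range f)

set_option synthInstance.maxHeartbeats 1000000 in
/-- Dimension count for the homology of a two-step complex of matrices. -/
lemma finrank_homologyAt_add {K : Type*} [Field K] {m n p : Type*}
    [Fintype m] [Fintype n] [Fintype p]
    (M0 : Matrix n m K) (M1 : Matrix p n K) (h : M1 * M0 = 0) :
    Module.finrank K (homologyAt' M0.mulVecLin M1.mulVecLin)
      + M0.rank + M1.rank = Fintype.card n := by
  classical
  have hle : LinearMap.range M0.mulVecLin ≤ LinearMap.ker M1.mulVecLin := by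
    rintro x ⟨y, rfl⟩
    simp only [LinearMap.mem_ker, Matrix.mulVecLin_apply, Matrix.mulVec_mulVec, h,
      Matrix.zero_mulVec]
  have e1 : Module.finrank K (homologyAt' M0.mulVecLin M1.mulVecLin)
      + Module.finrank K
        (Submodule.comap (LinearMap.ker M1.mulVecLin).subtype (LinearMap.range M0.mulVecLin))
      = Module.finrank K (LinearMap.ker M1.mulVecLin) :=
    Submodule.finrank_quotient_add_finrank _
  have e2 : Module.finrank K
      (Submodule.comap (LinearMap.ker M1.mulVecLin).subtype (LinearMap.range M0.mulVecLin))
      = Module.finrank K (LinearMap.range M0.mulVecLin) :=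
    (Submodule.comapSubtypeEquivOfLe hle).finrank_eq
  have e3 := LinearMap.finrank_range_add_finrank_ker M1.mulVecLin
  rw [Module.finrank_pi] at e3
  rw [e2] at e1
  unfold Matrix.rank
  omega

/-- Genericity / upper semicontinuity: let `C_F` and `C_E` be finite
cochain complexes on the same finite basis, over fields `F` and `E`, whose
differential coefficients are given by common "rational expressions": elements
of a subring `S ⊆ F` specializing to `E` via a ring homomorphism `ψ : S →+* E`.
Assume `d² = 0`, the coefficients are homogeneous of degree `+1`, and whenever a
specialized coefficient is nonzero in `E` the generic coefficient is nonzero in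
`F`.  Then at each spot, `dim_F H^i(C_F) ≤ dim_E H^i(C_E)`. -/
theorem stmt_17 {F E B0 B1 B2 : Type*} [Field F] [Field E]
    [Fintype B0] [Fintype B1] [Fintype B2]
    [DecidableEq B0] [DecidableEq B1] [DecidableEq B2]
    (S : Subring F) (ψ : S →+* E)
    (c0 : B0 → B1 → S) (c1 : B1 → B2 → S)
    (hdd : ∀ (a : B0) (b : B2), ∑ w : B1, c0 a w * c1 w b = 0)
    (hspec0 : ∀ (a : B0) (b : B1), ψ (c0 a b) ≠ 0 → ((c0 a b : F) ≠ 0))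
    (hspec1 : ∀ (a : B1) (b : B2), ψ (c1 a b) ≠ 0 → ((c1 a b : F) ≠ 0)) :
    Module.finrank F (homologyAt'
        (Matrix.mulVecLin (Matrix.of fun (t : B1) (z : B0) => ((c0 z t : F))))
        (Matrix.mulVecLin (Matrix.of fun (t : B2) (z : B1) => ((c1 z t : F)))))
      ≤ Module.finrank E (homologyAt'
        (Matrix.mulVecLin (Matrix.of fun (t : B1) (z : B0) => ψ (c0 z t)))
        (Matrix.mulVecLin (Matrix.of fun (t : B2) (z : B1) => ψ (c1 z t)))) := by
  classical
  set A0 : Matrix B1 B0 S := Matrix.of fun t z => c0 z t with hA0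
  set A1 : Matrix B2 B1 S := Matrix.of fun t z => c1 z t with hA1
  have hSmul : A1 * A0 = 0 := by
    ext a b
    have h : (A1 * A0) a b = (0 : S) := by
      rw [Matrix.mul_apply, ← hdd b a]
      exact Finset.sum_congr rfl fun w _ => mul_comm _ _
    simp [h]
  have hFmul : (A1.map S.subtype) * (A0.map S.subtype) = 0 := by
    have : (A1.map S.subtype) * (A0.map S.subtype) = (A1 * A0).map S.subtype := by
      rw [Matrix.map_mul]
    rw [this, hSmul]
    ext a b
    simp
  have hEmul : (A1.map ψ) * (A0.map ψ) = 0 := by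
    have : (A1.map ψ) * (A0.map ψ) = (A1 * A0).map ψ := by
      rw [Matrix.map_mul]
    rw [this, hSmul]
    ext a b
    simp
  have eF := finrank_homologyAt_add (A0.map S.subtype) (A1.map S.subtype) hFmul
  have eE := finrank_homologyAt_add (A0.map ψ) (A1.map ψ) hEmul
  have i0 := rank_map_spec_le S ψ A0
  have i1 := rank_map_spec_le S ψ A1
  have hF0 : (Matrix.of fun (t : B1) (z : B0) => ((c0 z t : F))) = A0.map S.subtype := rfl
  have hF1 : (Matrix.of fun (t : B2) (z : B1) => ((c1 z t : F))) = A1.map S.subtype := rfl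
  have hE0 : (Matrix.of fun (t : B1) (z : B0) => ψ (c0 z t)) = A0.map ψ := rfl
  have hE1 : (Matrix.of fun (t : B2) (z : B1) => ψ (c1 z t)) = A1.map ψ := rfl
  rw [hF0, hF1, hE0, hE1]
  omega
end
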